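/- For a random variable X with E[|X| (log⁺|X|)^d] < ∞, the series ∑_{j=1}^∞ j^{-1} ∫_j^∞ (log⁺ x)^{d-1} P(|X| > x) dx is finite; indeed it is bounded by a constant times E[|X|(log⁺|X|)^d]. -/
import Mathlib

open MeasureTheory ENNReal

lemma stmt11_tsum_bound (x : ℝ) :
    (∑' j : ℕ+, ((j : ℕ) : ℝ≥0∞)⁻¹ * (Set.Ioi (((j : ℕ) : ℝ))).indicator (fun _ => (1:ℝ≥0∞)) x)
      ≤ (Set.Ioi (1:ℝ)).indicator (fun y => ENNReal.ofReal (2 * max 1 (Real.log y))) x := by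
  rcases le_or_gt x 1 with hx | hx
  · have h0 : ∀ j : ℕ+, ((j : ℕ) : ℝ≥0∞)⁻¹ *
        (Set.Ioi (((j : ℕ) : ℝ))).indicator (fun _ => (1:ℝ≥0∞)) x = 0 := by
      intro j
      have hj : x ∉ Set.Ioi (((j : ℕ) : ℝ)) := by
        simp only [Set.mem_Ioi, not_lt]
        exact hx.trans (by exact_mod_cast j.one_le)
      simp [Set.indicator_of_notMem hj]
    rw [tsum_congr h0]
    simp
  · rw [Set.indicator_of_mem (Set.mem_Ioi.2 hx)]
    have hx0 : (0:ℝ) < x := by linarith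
    set n := ⌊x⌋₊ with hn
    have hn1 : 1 ≤ n := Nat.le_floor (by exact_mod_cast hx.le)
    have hnx : (n : ℝ) ≤ x := Nat.floor_le hx0.le
    have hxn : x < n + 1 := Nat.lt_floor_add_one x
    have hre : (∑' j : ℕ+, ((j : ℕ) : ℝ≥0∞)⁻¹ *
        (Set.Ioi (((j : ℕ) : ℝ))).indicator (fun _ => (1:ℝ≥0∞)) x)
        = ∑' i : ℕ, (((i+1 : ℕ)) : ℝ≥0∞)⁻¹ *
          (Set.Ioi (((i+1 : ℕ) : ℝ))).indicator (fun _ => (1:ℝ≥0∞)) x := by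
      rw [← Equiv.pnatEquivNat.symm.tsum_eq]
      exact tsum_congr fun i => by simp [Equiv.pnatEquivNat, Nat.succPNat]
    rw [hre]
    have hzero : ∀ i ∉ Finset.range n, (((i+1 : ℕ)) : ℝ≥0∞)⁻¹ *
        (Set.Ioi (((i+1 : ℕ) : ℝ))).indicator (fun _ => (1:ℝ≥0∞)) x = 0 := by
      intro i hi
      have hni : n ≤ i := by simpa using hi
      have hmem : x ∉ Set.Ioi (((i+1 : ℕ) : ℝ)) := by
        simp only [Set.mem_Ioi, not_lt]
        have h7 : (n:ℝ) ≤ (i:ℝ) := by exact_mod_cast hni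
        push_cast
        linarith
      rw [Set.indicator_of_notMem hmem, mul_zero]
    rw [tsum_eq_sum hzero]
    calc ∑ i ∈ Finset.range n, (((i+1 : ℕ)) : ℝ≥0∞)⁻¹ *
          (Set.Ioi (((i+1 : ℕ) : ℝ))).indicator (fun _ => (1:ℝ≥0∞)) x
        ≤ ∑ i ∈ Finset.range n, (((i+1 : ℕ)) : ℝ≥0∞)⁻¹ := by
          refine Finset.sum_le_sum fun i _ => ?_
          have : (Set.Ioi (((i+1 : ℕ) : ℝ))).indicator (fun _ => (1:ℝ≥0∞)) x ≤ 1 :=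
            Set.indicator_le_self' (fun _ _ => zero_le_one) x |>.trans ?_ |>.trans le_rfl
          · exact mul_le_of_le_one_right' this
          · exact le_rfl
      _ = ENNReal.ofReal (∑ i ∈ Finset.range n, ((i:ℝ)+1)⁻¹) := by
          rw [ENNReal.ofReal_sum_of_nonneg (fun i _ => by positivity)]
          refine Finset.sum_congr rfl fun i _ => ?_
          rw [ENNReal.ofReal_inv_of_pos (by positivity)]
          congr 1
          rw [← ENNReal.ofReal_natCast (i+1)]
          push_cast
          ring_nf
      _ ≤ ENNReal.ofReal (2 * max 1 (Real.log x)) := by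
          apply ENNReal.ofReal_le_ofReal
          have h1 : ∑ i ∈ Finset.range n, ((i:ℝ)+1)⁻¹ = (harmonic n : ℝ) := by
            rw [harmonic]
            push_cast
            rfl
          rw [h1]
          have h2 := harmonic_le_one_add_log n
          have h3 : Real.log n ≤ Real.log x :=
            Real.log_le_log (by exact_mod_cast Nat.lt_of_lt_of_le Nat.zero_lt_one hn1) hnx
          have h4 : 0 ≤ Real.log x := Real.log_nonneg hx.le
          have h5 := le_max_left 1 (Real.log x)
          have h6 := le_max_right 1 (Real.log x)
          linarith

lemma stmt11_L_mono {a b : ℝ} (ha : 0 ≤ a) (hab : a ≤ b) :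
    max 1 (Real.log a) ≤ max 1 (Real.log b) := by
  apply max_le (le_max_left _ _)
  rcases eq_or_lt_of_le ha with h | h
  · rw [← h, Real.log_zero]
    exact zero_le_one.trans (le_max_left _ _)
  · exact (Real.log_le_log h hab).trans (le_max_right _ _)

lemma stmt11_g_intble (d : ℕ) {s : ℝ} (hs : 0 ≤ s) :
    IntervalIntegrable (fun t => (max 1 (Real.log t)) ^ d) volume 0 s := by
  apply MonotoneOn.intervalIntegrable
  rw [Set.uIcc_of_le hs]
  intro a ha b hb hab
  exact pow_le_pow_left₀ (zero_le_one.trans (le_max_left _ _)) (stmt11_L_mono ha.1 hab) d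

lemma stmt11_int_le (d : ℕ) {s : ℝ} (hs : 0 ≤ s) :
    ∫ t in (0:ℝ)..s, (max 1 (Real.log t)) ^ d ≤ s * (max 1 (Real.log s)) ^ d := by
  calc ∫ t in (0:ℝ)..s, (max 1 (Real.log t)) ^ d
      ≤ ∫ t in (0:ℝ)..s, (max 1 (Real.log s)) ^ d := by
        apply intervalIntegral.integral_mono_on hs (stmt11_g_intble d hs)
          intervalIntegrable_const
        intro t ht
        exact pow_le_pow_left₀ (zero_le_one.trans (le_max_left _ _))
          (stmt11_L_mono ht.1 ht.2) d
    _ = s * (max 1 (Real.log s)) ^ d := by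
        rw [intervalIntegral.integral_const, smul_eq_mul, sub_zero]

theorem stmt11 {Ω : Type*} [MeasurableSpace Ω] (P : Measure Ω) [IsProbabilityMeasure P]
    (d : ℕ) (hd : 1 ≤ d)
    (X : Ω → ℝ) (hX : Measurable X)
    (hmom : ∫⁻ ω, ENNReal.ofReal (|X ω| * (max 1 (Real.log |X ω|)) ^ d) ∂P < ∞) :
    (∑' j : ℕ+, ((j : ℕ) : ℝ≥0∞)⁻¹ *
        ∫⁻ x in Set.Ioi (((j : ℕ) : ℝ)),
          ENNReal.ofReal ((max 1 (Real.log x)) ^ (d - 1)) * P {ω : Ω | x < |X ω|}) < ∞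
    ∧ ∃ c : ℝ≥0∞, c < ∞ ∧
      (∑' j : ℕ+, ((j : ℕ) : ℝ≥0∞)⁻¹ *
          ∫⁻ x in Set.Ioi (((j : ℕ) : ℝ)),
            ENNReal.ofReal ((max 1 (Real.log x)) ^ (d - 1)) * P {ω : Ω | x < |X ω|})
        ≤ c * ∫⁻ ω, ENNReal.ofReal (|X ω| * (max 1 (Real.log |X ω|)) ^ d) ∂P := by
  set f : ℝ → ℝ≥0∞ :=
    fun x => ENNReal.ofReal ((max 1 (Real.log x)) ^ (d - 1)) * P {ω : Ω | x < |X ω|} with hf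
  have hPanti : Antitone fun x : ℝ => P {ω : Ω | x < |X ω|} :=
    fun s t hst => measure_mono fun ω h => lt_of_le_of_lt hst h
  have hfm : Measurable f :=
    (((measurable_const.max Real.measurable_log).pow_const (d - 1)).ennreal_ofReal).mul
      (Antitone.measurable hPanti)
  -- measurability of summand functions
  have hgm : ∀ j : ℕ+, Measurable fun x : ℝ =>
      ((j : ℕ) : ℝ≥0∞)⁻¹ * (Set.Ioi (((j : ℕ) : ℝ))).indicator (fun _ => (1:ℝ≥0∞)) x * f x :=
    fun j => ((measurable_const.indicator measurableSet_Ioi).const_mul _).mul hfm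
  -- rewrite each term as a full-line integral
  have hterm : ∀ j : ℕ+, ((j : ℕ) : ℝ≥0∞)⁻¹ * ∫⁻ x in Set.Ioi (((j : ℕ) : ℝ)), f x
      = ∫⁻ x, ((j : ℕ) : ℝ≥0∞)⁻¹ *
          (Set.Ioi (((j : ℕ) : ℝ))).indicator (fun _ => (1:ℝ≥0∞)) x * f x := by
    intro j
    rw [← lintegral_indicator measurableSet_Ioi,
      ← lintegral_const_mul _ ((hfm.indicator measurableSet_Ioi))]
    congr 1
    funext x
    by_cases hx : x ∈ Set.Ioi (((j : ℕ) : ℝ))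
    · simp [Set.indicator_of_mem hx]
    · simp [Set.indicator_of_notMem hx]
  have hS : (∑' j : ℕ+, ((j : ℕ) : ℝ≥0∞)⁻¹ * ∫⁻ x in Set.Ioi (((j : ℕ) : ℝ)), f x)
      = ∫⁻ x, ∑' j : ℕ+, ((j : ℕ) : ℝ≥0∞)⁻¹ *
          (Set.Ioi (((j : ℕ) : ℝ))).indicator (fun _ => (1:ℝ≥0∞)) x * f x := by
    rw [tsum_congr hterm, ← lintegral_tsum fun j => (hgm j).aemeasurable]
  -- pointwise bound on the tsum
  have hpt : ∀ x : ℝ, (∑' j : ℕ+, ((j : ℕ) : ℝ≥0∞)⁻¹ *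
        (Set.Ioi (((j : ℕ) : ℝ))).indicator (fun _ => (1:ℝ≥0∞)) x * f x)
      ≤ (Set.Ioi (1:ℝ)).indicator
          (fun y => ENNReal.ofReal (2 * max 1 (Real.log y)) * f y) x := by
    intro x
    have : (∑' j : ℕ+, ((j : ℕ) : ℝ≥0∞)⁻¹ *
        (Set.Ioi (((j : ℕ) : ℝ))).indicator (fun _ => (1:ℝ≥0∞)) x * f x)
        = (∑' j : ℕ+, ((j : ℕ) : ℝ≥0∞)⁻¹ *
            (Set.Ioi (((j : ℕ) : ℝ))).indicator (fun _ => (1:ℝ≥0∞)) x) * f x :=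
      ENNReal.tsum_mul_right
    rw [this]
    have h2 := mul_le_mul_left (stmt11_tsum_bound x) (f x)
    refine h2.trans (le_of_eq ?_)
    by_cases hx : x ∈ Set.Ioi (1:ℝ)
    · simp [Set.indicator_of_mem hx]
    · simp [Set.indicator_of_notMem hx]
  -- main comparison
  have key : (∑' j : ℕ+, ((j : ℕ) : ℝ≥0∞)⁻¹ * ∫⁻ x in Set.Ioi (((j : ℕ) : ℝ)), f x)
      ≤ 2 * ∫⁻ ω, ENNReal.ofReal (|X ω| * (max 1 (Real.log |X ω|)) ^ d) ∂P := by
    rw [hS]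
    calc ∫⁻ x, ∑' j : ℕ+, ((j : ℕ) : ℝ≥0∞)⁻¹ *
          (Set.Ioi (((j : ℕ) : ℝ))).indicator (fun _ => (1:ℝ≥0∞)) x * f x
        ≤ ∫⁻ x, (Set.Ioi (1:ℝ)).indicator
            (fun y => ENNReal.ofReal (2 * max 1 (Real.log y)) * f y) x :=
          lintegral_mono hpt
      _ = ∫⁻ x in Set.Ioi (1:ℝ), ENNReal.ofReal (2 * max 1 (Real.log x)) * f x :=
          lintegral_indicator measurableSet_Ioi _
      _ = ∫⁻ x in Set.Ioi (1:ℝ),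
            2 * (P {ω : Ω | x < |X ω|} * ENNReal.ofReal ((max 1 (Real.log x)) ^ d)) := by
          refine lintegral_congr fun x => ?_
          have hL1 : (0:ℝ) ≤ max 1 (Real.log x) := zero_le_one.trans (le_max_left _ _)
          rw [hf]
          rw [show ENNReal.ofReal (2 * max 1 (Real.log x)) *
              (ENNReal.ofReal ((max 1 (Real.log x)) ^ (d - 1)) * P {ω : Ω | x < |X ω|})
              = (ENNReal.ofReal (2 * max 1 (Real.log x)) *
                ENNReal.ofReal ((max 1 (Real.log x)) ^ (d - 1))) * P {ω : Ω | x < |X ω|} from by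
            ring]
          rw [← ENNReal.ofReal_mul (by positivity)]
          have hpow : 2 * max 1 (Real.log x) * (max 1 (Real.log x)) ^ (d - 1)
              = 2 * (max 1 (Real.log x)) ^ d := by
            rw [mul_assoc, ← pow_succ']
            congr 2
            omega
          rw [hpow, ENNReal.ofReal_mul (by norm_num), ENNReal.ofReal_ofNat]
          ring
      _ ≤ ∫⁻ x in Set.Ioi (0:ℝ),
            2 * (P {ω : Ω | x < |X ω|} * ENNReal.ofReal ((max 1 (Real.log x)) ^ d)) :=
          lintegral_mono_set (Set.Ioi_subset_Ioi zero_le_one)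
      _ = 2 * ∫⁻ x in Set.Ioi (0:ℝ),
            P {ω : Ω | x < |X ω|} * ENNReal.ofReal ((max 1 (Real.log x)) ^ d) := by
          rw [lintegral_const_mul]
          exact (Antitone.measurable hPanti).mul
            (((measurable_const.max Real.measurable_log).pow_const d).ennreal_ofReal)
      _ = 2 * ∫⁻ ω, ENNReal.ofReal (∫ t in (0:ℝ)..|X ω|, (max 1 (Real.log t)) ^ d) ∂P := by
          congr 1
          exact (lintegral_comp_eq_lintegral_meas_lt_mul P
            (ae_of_all _ fun ω => abs_nonneg (X ω)) (hX.abs.aemeasurable)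
            (fun t ht => stmt11_g_intble d ht.le)
            (ae_of_all _ fun t => by positivity)).symm
      _ ≤ 2 * ∫⁻ ω, ENNReal.ofReal (|X ω| * (max 1 (Real.log |X ω|)) ^ d) ∂P := by
          gcongr with ω
          exact stmt11_int_le d (abs_nonneg (X ω))
  refine ⟨lt_of_le_of_lt key (ENNReal.mul_lt_top (by norm_num) hmom), 2,
    (by norm_num), key⟩
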